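/- Let T : E → F be a positive, order continuous linear operator and let S : G → F be a positive linear operator with S(y) = T(y) for all y ∈ E. Then S is order continuous: for every nonempty downward-directed set D of positive elements of G with infimum 0 in G, the set S(D) has infimum 0 in F. -/

import Mathlib

theorem stmt16
    {G : Type*} [Lattice G] [AddCommGroup G] [Module ℝ G]
    [CovariantClass G G (· + ·) (· ≤ ·)] [PosSMulMono ℝ G]
    (arch : ∀ x y : G, (∀ n : ℕ, n • x ≤ y) → x ≤ 0)
    (E : Set G)
    (hE0 : (0 : G) ∈ E)
    (hEadd : ∀ x ∈ E, ∀ y ∈ E, x + y ∈ E)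
    (hEsmul : ∀ (c : ℝ), ∀ x ∈ E, c • x ∈ E)
    (hEsup : ∀ x ∈ E, ∀ y ∈ E, x ⊔ y ∈ E)
    (hEinf : ∀ x ∈ E, ∀ y ∈ E, x ⊓ y ∈ E)
    (hdense : ∀ x : G, 0 < x → ∃ y ∈ E, 0 < y ∧ y ≤ x)
    (hmaj : ∀ x : G, ∃ y ∈ E, x ≤ y)
    {F : Type*} [ConditionallyCompleteLattice F] [AddCommGroup F] [Module ℝ F]
    [CovariantClass F F (· + ·) (· ≤ ·)] [PosSMulMono ℝ F]
    (T : G → F)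
    (hT_add : ∀ x ∈ E, ∀ y ∈ E, T (x + y) = T x + T y)
    (hT_smul : ∀ (c : ℝ), ∀ x ∈ E, T (c • x) = c • T x)
    (hT_pos : ∀ x ∈ E, 0 ≤ x → 0 ≤ T x)
    (hT_oc : ∀ D : Set G, D.Nonempty → D ⊆ E → DirectedOn (· ≥ ·) D →
      IsGLB D 0 → IsGLB (T '' D) 0)
    (S : G →ₗ[ℝ] F)
    (hS_pos : ∀ x : G, 0 ≤ x → 0 ≤ S x)
    (hS_ext : ∀ y ∈ E, S y = T y) :
    ∀ D : Set G, D.Nonempty → (∀ d ∈ D, 0 ≤ d) → DirectedOn (· ≥ ·) D →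
      IsGLB D 0 → IsGLB (S '' D) 0 := by
  intro D hDne hDpos hDdir hDglb
  set C : Set G := {y | y ∈ E ∧ ∃ d ∈ D, d ≤ y} with hC
  have hS_mono : ∀ x y : G, x ≤ y → S x ≤ S y := by
    intro x y hxy
    have h := hS_pos (y - x) (by simpa [sub_nonneg] using hxy)
    rw [map_sub] at h
    exact sub_nonneg.mp h
  obtain ⟨d0, hd0⟩ := hDne
  obtain ⟨y0, hy0E, hy0⟩ := hmaj d0
  have hCne : C.Nonempty := ⟨y0, hy0E, d0, hd0, hy0⟩
  have hCE : C ⊆ E := fun y hy => hy.1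
  have hCdir : DirectedOn (· ≥ ·) C := by
    rintro y1 ⟨hy1E, d1, hd1D, hd1⟩ y2 ⟨hy2E, d2, hd2D, hd2⟩
    obtain ⟨d, hdD, hdd1, hdd2⟩ := hDdir d1 hd1D d2 hd2D
    exact ⟨y1 ⊓ y2, ⟨hEinf _ hy1E _ hy2E, d, hdD,
      le_inf (le_trans hdd1 hd1) (le_trans hdd2 hd2)⟩, inf_le_left, inf_le_right⟩
  have hsubE : ∀ y ∈ E, ∀ e ∈ E, y - e ∈ E := by
    intro y hy e he
    have : (-1 : ℝ) • e ∈ E := hEsmul (-1) e he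
    rw [neg_one_smul] at this
    simpa [sub_eq_add_neg] using hEadd y hy _ this
  have hCglb : IsGLB C 0 := by
    constructor
    · rintro y ⟨hyE, d, hdD, hdy⟩
      exact le_trans (hDpos d hdD) hdy
    · intro c hc
      have hcd : ∀ d ∈ D, c ≤ d := by
        intro d hdD
        by_contra hcdn
        have hnle : ¬ c ⊔ d ≤ d := fun h => hcdn (le_trans le_sup_left h)
        have hu : 0 < c ⊔ d - d := by
          rw [sub_pos]; exact lt_of_le_not_ge le_sup_right hnle
        obtain ⟨e, heE, hepos, heu⟩ := hdense _ hu
        obtain ⟨z0, hz0E, hz0⟩ := hmaj d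
        have key : ∀ n : ℕ, z0 - n • e ∈ E ∧ d ≤ z0 - n • e := by
          intro n
          induction n with
          | zero => simpa using ⟨hz0E, hz0⟩
          | succ n ih =>
            obtain ⟨ihE, ihd⟩ := ih
            have hcy : c ≤ z0 - n • e := hc ⟨ihE, d, hdD, ihd⟩
            have hsup : c ⊔ d ≤ z0 - n • e := sup_le hcy ihd
            have hstep : d ≤ z0 - n • e - e := by
              have h1 : z0 - n • e - (c ⊔ d - d) ≤ z0 - n • e - e := by
                have := heu
                simp only [sub_le_sub_iff_left]
                exact this
              have h2 : d ≤ z0 - n • e - (c ⊔ d - d) := by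
                have := sub_le_sub_right hsup (c ⊔ d - d)
                calc d = c ⊔ d - (c ⊔ d - d) := by abel
                  _ ≤ z0 - n • e - (c ⊔ d - d) := this
              exact le_trans h2 h1
            refine ⟨?_, ?_⟩
            · have := hsubE _ ihE _ heE
              have heq : z0 - (n + 1) • e = z0 - n • e - e := by
                rw [succ_nsmul]; abel
              rw [heq]; exact this
            · have heq : z0 - (n + 1) • e = z0 - n • e - e := by
                rw [succ_nsmul]; abel
              rw [heq]; exact hstep
        have harch : ∀ n : ℕ, n • e ≤ z0 - d := by
          intro n
          have h2 : d + n • e ≤ z0 := by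
            calc d + n • e ≤ (z0 - n • e) + n • e := add_le_add_left (key n).2 _
              _ = z0 := by abel
          calc n • e = d + n • e - d := by abel
            _ ≤ z0 - d := sub_le_sub_right h2 d
        exact (not_le_of_gt hepos) (arch e (z0 - d) harch)
      exact hDglb.2 hcd
  constructor
  · rintro _ ⟨d, hdD, rfl⟩
    exact hS_pos d (hDpos d hdD)
  · intro b hb
    have hbT : b ∈ lowerBounds (T '' C) := by
      rintro _ ⟨y, ⟨hyE, d, hdD, hdy⟩, rfl⟩
      calc b ≤ S d := hb ⟨d, hdD, rfl⟩
        _ ≤ S y := hS_mono d y hdy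
        _ = T y := hS_ext y hyE
    exact (hT_oc C hCne hCE hCdir hCglb).2 hbT
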